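/- Let G be a finite group acting faithfully and transitively on a finite set Ω of size n > 1, and let D be the subgroup of G generated by the derangements. Then the index |G : D| is at most n − 1. -/

import Mathlib

open MulAction Subgroup

/-- The index of the derangements subgroup `D` in a finite faithful transitive
permutation group of degree `n > 1` is at most `n - 1`. -/
theorem stmt_18 {G Ω : Type*} [Group G] [Finite G] [Finite Ω] [Nontrivial Ω]
    [MulAction G Ω] [FaithfulSMul G Ω] [MulAction.IsPretransitive G Ω] :
    (Subgroup.closure {g : G | ∀ α : Ω, g • α ≠ α}).index ≤ Nat.card Ω - 1 := by
  classical
  cases nonempty_fintype G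
  cases nonempty_fintype Ω
  set S : Set G := {g : G | ∀ α : Ω, g • α ≠ α} with hS
  set D := Subgroup.closure S with hDdef
  -- D is normal
  have hDnormal : D.Normal := by
    constructor
    intro g hg x
    induction hg using Subgroup.closure_induction with
    | mem g hg =>
        refine subset_closure (fun α hα => ?_)
        refine hg (x⁻¹ • α) ?_
        have h2 : x⁻¹ • ((x * g * x⁻¹) • α) = x⁻¹ • α := by rw [hα]
        rw [smul_smul] at h2
        have h3 : x⁻¹ * (x * g * x⁻¹) = g * x⁻¹ := by group
        rw [h3, ← smul_smul] at h2
        exact h2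
    | one => simpa using D.one_mem
    | mul a b ha hb iha ihb => simpa [mul_assoc] using D.mul_mem iha ihb
    | inv a ha iha => simpa [mul_assoc] using D.inv_mem iha
  haveI := hDnormal
  -- elements outside D fix a point
  have hfix : ∀ g : G, g ∉ D → ∃ α : Ω, g • α = α := by
    intro g hg
    by_contra h
    push_neg at h
    exact hg (subset_closure h)
  -- Burnside for G
  have hG : (∑ g : G, Fintype.card (fixedBy Ω g))
      = Fintype.card (Quotient (orbitRel G Ω)) * Fintype.card G :=
    MulAction.sum_card_fixedBy_eq_card_orbits_mul_card_group G Ω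
  have hGorb : Fintype.card (Quotient (orbitRel G Ω)) = 1 := by
    rw [Fintype.card_eq_one_iff]
    refine ⟨Quotient.mk _ (Classical.arbitrary Ω), ?_⟩
    rintro ⟨y⟩
    exact Quotient.sound (exists_smul_eq G _ _)
  -- Burnside for D
  have hD : (∑ d : ↥D, Fintype.card (fixedBy Ω (d : G)))
      = Fintype.card (Quotient (orbitRel ↥D Ω)) * Fintype.card ↥D := by
    have := MulAction.sum_card_fixedBy_eq_card_orbits_mul_card_group ↥D Ω
    simpa [Subgroup.smul_def] using this
  set k := Fintype.card (Quotient (orbitRel ↥D Ω)) with hk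
  have hk1 : 1 ≤ k := @Fintype.card_pos _ _ ⟨Quotient.mk _ (Classical.arbitrary Ω)⟩
  -- split the sum over G into D-part and complement
  have hsplit : (∑ g ∈ Finset.univ.filter (· ∈ D), Fintype.card (fixedBy Ω g))
      + (∑ g ∈ Finset.univ.filter (· ∉ D), Fintype.card (fixedBy Ω g))
      = Fintype.card G := by
    rw [Finset.sum_filter_add_sum_filter_not, hG, hGorb, one_mul]
  have hsubty : (∑ g ∈ Finset.univ.filter (· ∈ D), Fintype.card (fixedBy Ω g))
      = ∑ d : ↥D, Fintype.card (fixedBy Ω (d : G)) :=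
    Finset.sum_subtype (p := fun x => x ∈ D) (Finset.univ.filter (· ∈ D))
      (fun x => by simp) (fun g => Fintype.card (fixedBy Ω g))
  have hcardout : (Finset.univ.filter (· ∉ D)).card = Fintype.card G - Fintype.card ↥D := by
    have h1 : (Finset.univ.filter (· ∈ D)).card = Fintype.card ↥D := by
      simp [Fintype.card_subtype]
    have h2 := Finset.card_filter_add_card_filter_not
      (s := (Finset.univ : Finset G)) (p := (· ∈ D))
    rw [Finset.card_univ] at h2
    omega
  have hout1 : ∀ g ∈ Finset.univ.filter (· ∉ D), 1 ≤ Fintype.card (fixedBy Ω g) := by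
    intro g hg
    simp only [Finset.mem_filter] at hg
    obtain ⟨α, hα⟩ := hfix g hg.2
    exact Fintype.card_pos_iff.mpr ⟨⟨α, hα⟩⟩
  have houtge : Fintype.card G - Fintype.card ↥D
      ≤ (∑ g ∈ Finset.univ.filter (· ∉ D), Fintype.card (fixedBy Ω g)) := by
    calc Fintype.card G - Fintype.card ↥D
        = ∑ _g ∈ Finset.univ.filter (· ∉ D), 1 := by
          rw [Finset.sum_const, smul_eq_mul, mul_one, hcardout]
      _ ≤ _ := Finset.sum_le_sum hout1
  have hDle : Fintype.card ↥D ≤ Fintype.card G :=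
    Fintype.card_le_of_injective _ Subtype.val_injective
  have hDpos : 0 < Fintype.card ↥D := Fintype.card_pos
  rw [hsubty, hD] at hsplit
  -- k = 1 : D transitive
  have hkeq : k = 1 := by
    by_contra hne
    have h2 : 2 ≤ k := by omega
    have h3 : 2 * Fintype.card ↥D ≤ k * Fintype.card ↥D := Nat.mul_le_mul_right _ h2
    omega
  rw [hkeq, one_mul] at hsplit
  -- each g outside D fixes exactly one point
  have hsum_out : (∑ g ∈ Finset.univ.filter (· ∉ D), Fintype.card (fixedBy Ω g))
      = (Finset.univ.filter (· ∉ D)).card := by omega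
  have hone : ∀ g, g ∉ D → Fintype.card (fixedBy Ω g) = 1 := by
    intro g hg
    have hgmem : g ∈ Finset.univ.filter (· ∉ D) := by simp [hg]
    by_contra hne
    have h2 : 2 ≤ Fintype.card (fixedBy Ω g) := by
      have := hout1 g hgmem; omega
    have hsum2 : Fintype.card (fixedBy Ω g)
        + ∑ x ∈ (Finset.univ.filter (· ∉ D)).erase g, Fintype.card (fixedBy Ω x)
        = ∑ x ∈ Finset.univ.filter (· ∉ D), Fintype.card (fixedBy Ω x) :=
      Finset.add_sum_erase _ (f := fun g => Fintype.card (fixedBy Ω g)) hgmem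
    have herase : ((Finset.univ.filter (· ∉ D)).erase g).card
        ≤ ∑ x ∈ (Finset.univ.filter (· ∉ D)).erase g, Fintype.card (fixedBy Ω x) :=
      Finset.card_nsmul_le_sum _ _ 1
        (fun x hx => hout1 x (Finset.mem_of_mem_erase hx)) |>.trans_eq' (by simp)
    have hcarde : ((Finset.univ.filter (· ∉ D)).erase g).card
        = (Finset.univ.filter (· ∉ D)).card - 1 := Finset.card_erase_of_mem hgmem
    have hcpos : 1 ≤ (Finset.univ.filter (· ∉ D)).card := Finset.card_pos.mpr ⟨g, hgmem⟩
    omega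
  -- D is transitive
  have htrans : ∀ x y : Ω, ∃ d : ↥D, (d : G) • y = x := by
    intro x y
    have hsub : Subsingleton (Quotient (orbitRel ↥D Ω)) :=
      Fintype.card_le_one_iff_subsingleton.mp (by rw [← hk, hkeq])
    have hq : (Quotient.mk (orbitRel ↥D Ω) x) = Quotient.mk (orbitRel ↥D Ω) y :=
      Subsingleton.elim _ _
    obtain ⟨d, hd⟩ := Quotient.exact hq
    exact ⟨d, hd⟩
  -- elements fixing two points are in D
  have hfix2 : ∀ g : G, ∀ x y : Ω, x ≠ y → g • x = x → g • y = y → g ∈ D := by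
    intro g x y hxy hx hy
    by_contra hg
    have h1 := hone g hg
    have h2 := Fintype.card_le_one_iff.mp h1.le
      (⟨x, hx⟩ : fixedBy Ω g) (⟨y, hy⟩ : fixedBy Ω g)
    exact hxy (by simpa using congrArg Subtype.val h2)
  obtain ⟨α, β, hαβ⟩ := exists_pair_ne Ω
  set A := stabilizer G α with hA
  have hABD : stabilizer G α ⊓ stabilizer G β ≤ D := fun g hg =>
    hfix2 g α β hαβ hg.1 hg.2
  -- the stabilizer of α surjects onto G ⧸ D
  let φ : ↥A →* G ⧸ D := (QuotientGroup.mk' D).comp A.subtype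
  have hφ : Function.Surjective φ := by
    intro q
    induction q using QuotientGroup.induction_on with
    | H g =>
      obtain ⟨d, hd⟩ := htrans (g • α) α
      refine ⟨⟨(d : G)⁻¹ * g, ?_⟩, ?_⟩
      · rw [mem_stabilizer_iff, mul_smul, ← hd, inv_smul_smul]
      · show QuotientGroup.mk ((d : G)⁻¹ * g) = QuotientGroup.mk g
        rw [QuotientGroup.eq]
        have heq : ((d : G)⁻¹ * g)⁻¹ * g = g⁻¹ * (d : G) * (g⁻¹)⁻¹ := by group
        rw [heq]
        exact hDnormal.conj_mem _ d.2 g⁻¹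
  have hindex : D.index = D.relIndex A := by
    have h1 : φ.ker = D.subgroupOf A := by
      ext x
      simp [φ, MonoidHom.mem_ker, QuotientGroup.eq_one_iff, Subgroup.mem_subgroupOf]
    rw [relIndex, ← h1, Subgroup.index_ker, MonoidHom.range_eq_top.mpr hφ,
      Subgroup.index_eq_card]
    exact Nat.card_congr Subgroup.topEquiv.toEquiv |>.symm
  have hmono : D.relIndex A ≤ (stabilizer G α ⊓ stabilizer G β).relIndex A := by
    apply relIndex_le_of_le_left hABD
    exact (Nat.card_pos (α := ↥A ⧸ ((stabilizer G α ⊓ stabilizer G β).subgroupOf A))).ne'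
  have hinf : (stabilizer G α ⊓ stabilizer G β).relIndex A
      = ((stabilizer G β).subgroupOf A).index := by
    rw [relIndex, hA, inf_subgroupOf_left]
  have hstab : stabilizer ↥A β = (stabilizer G β).subgroupOf A := by
    ext g
    simp [Subgroup.mem_subgroupOf, mem_stabilizer_iff, Subgroup.smul_def]
  have horb : ((stabilizer G β).subgroupOf A).index = Nat.card (orbit ↥A β) := by
    rw [← hstab, Subgroup.index_eq_card]
    exact (Nat.card_congr (orbitEquivQuotientStabilizer ↥A β)).symm
  have horbsub : orbit ↥A β ⊆ {α}ᶜ := by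
    rintro x ⟨g, rfl⟩
    simp only [Set.mem_compl_iff, Set.mem_singleton_iff]
    intro hx
    have hg : (g : G) • α = α := g.2
    have hzz : (g : G) • β = (g : G) • α := by
      rw [show (g : G) • β = α from hx]
      exact hg.symm
    exact hαβ (smul_left_cancel _ hzz).symm
  have hcard : Nat.card (orbit ↥A β) ≤ Nat.card Ω - 1 := by
    have h1 : Nat.card (orbit ↥A β) = (orbit ↥A β).ncard := Nat.card_coe_set_eq _
    have h2 : ({α}ᶜ : Set Ω).ncard = Nat.card Ω - 1 := by
      rw [← Set.ncard_univ Ω, Set.compl_eq_univ_diff,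
        Set.ncard_diff (by simp), Set.ncard_singleton]
    rw [h1, ← h2]
    exact Set.ncard_le_ncard horbsub (Set.toFinite _)
  calc D.index = D.relIndex A := hindex
    _ ≤ (stabilizer G α ⊓ stabilizer G β).relIndex A := hmono
    _ = ((stabilizer G β).subgroupOf A).index := hinf
    _ = Nat.card (orbit ↥A β) := horb
    _ ≤ Nat.card Ω - 1 := hcard
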